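/- For every natural number n, 2·(2n − 1)·(2n − 3) · ∑_{0 ≤ i ≤ n, i odd} i³ · C(2n, n−i) = C(2n, n) · n²·(2n² − 4n + 1), as an identity of integers. -/

import Mathlib

private def Chn (n i : ℕ) : ℤ := if i ≤ n then (Nat.choose (2 * n) (n - i) : ℤ) else 0

private lemma aux_choose (n i : ℕ) :
    ((n : ℤ) + i + 1) * ((n : ℤ) + i + 2) * Chn n (i + 2)
      = ((n : ℤ) - i) * ((n : ℤ) - i - 1) * Chn n i := by
  unfold Chn
  by_cases h2 : i + 2 ≤ n
  · have h1 : i ≤ n := by omega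
    rw [if_pos h2, if_pos h1]
    obtain ⟨k, rfl⟩ : ∃ k, n = i + 2 + k := ⟨n - (i + 2), by omega⟩
    have e1 : i + 2 + k - (i + 2) = k := by omega
    have e2 : i + 2 + k - i = k + 2 := by omega
    rw [e1, e2]
    have hA := Nat.choose_succ_right_eq (2 * (i + 2 + k)) k
    have hB := Nat.choose_succ_right_eq (2 * (i + 2 + k)) (k + 1)
    have eA : 2 * (i + 2 + k) - k = 2 * i + 4 + k := by omega
    have eB : 2 * (i + 2 + k) - (k + 1) = 2 * i + 3 + k := by omega
    rw [eA] at hA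
    rw [eB] at hB
    have hA' : ((2 * (i + 2 + k)).choose (k + 1) : ℤ) * (k + 1)
        = ((2 * (i + 2 + k)).choose k : ℤ) * (2 * i + 4 + k) := by exact_mod_cast congrArg (Nat.cast : ℕ → ℤ) hA
    have hB' : ((2 * (i + 2 + k)).choose (k + 2) : ℤ) * (k + 2)
        = ((2 * (i + 2 + k)).choose (k + 1) : ℤ) * (2 * i + 3 + k) := by exact_mod_cast congrArg (Nat.cast : ℕ → ℤ) hB
    push_cast
    linear_combination (-(2 * (i : ℤ) + 3 + k)) * hA' + (-((k : ℤ) + 1)) * hB'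
  · by_cases h1 : i ≤ n
    · rw [if_neg h2, if_pos h1]
      have : n = i ∨ n = i + 1 := by omega
      rcases this with rfl | rfl <;> push_cast <;> ring
    · rw [if_neg h2, if_neg h1]; ring

private def Pn (n : ℕ) (i : ℕ) : ℤ :=
  (2 * (n : ℤ) - 1) * (i : ℤ) ^ 4 + (2 * (n : ℤ) - 1) * (2 * (n : ℤ) - 3) * (i : ℤ) ^ 3
    + (2 * (n : ℤ) ^ 3 - 9 * (n : ℤ) ^ 2 + 7 * (n : ℤ) - 2) * (i : ℤ) ^ 2
    + 2 * (n : ℤ) ^ 2 * ((n : ℤ) - 1) ^ 2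

private lemma aux_tele (n i : ℕ) :
    Pn n i * Chn n i - Pn n (i + 2) * Chn n (i + 2)
      = 2 * (2 * (n : ℤ) - 1) * (2 * (n : ℤ) - 3) * (i : ℤ) ^ 3 * Chn n i := by
  have hpos : ((n : ℤ) + i + 1) * ((n : ℤ) + i + 2) ≠ 0 := by positivity
  apply mul_left_cancel₀ hpos
  have h := aux_choose n i
  unfold Pn
  push_cast
  linear_combination (-((2 * (n : ℤ) - 1) * ((i : ℤ) + 2) ^ 4
      + (2 * (n : ℤ) - 1) * (2 * (n : ℤ) - 3) * ((i : ℤ) + 2) ^ 3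
      + (2 * (n : ℤ) ^ 3 - 9 * (n : ℤ) ^ 2 + 7 * (n : ℤ) - 2) * ((i : ℤ) + 2) ^ 2
      + 2 * (n : ℤ) ^ 2 * ((n : ℤ) - 1) ^ 2)) * h

/-- For every natural number `n`,
`2·(2n − 1)·(2n − 3) · ∑_{0 ≤ i ≤ n, i odd} i³ · C(2n, n−i) = C(2n, n) · n²·(2n² − 4n + 1)`,
as an identity of integers. -/
theorem stmt_4 (n : ℕ) :
    2 * (2 * (n : ℤ) - 1) * (2 * (n : ℤ) - 3) *
        (∑ i ∈ (Finset.range (n + 1)).filter (fun i => Odd i),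
          (i : ℤ) ^ 3 * (Nat.choose (2 * n) (n - i) : ℤ))
      = (Nat.choose (2 * n) n : ℤ) *
          ((n : ℤ) ^ 2 * (2 * (n : ℤ) ^ 2 - 4 * (n : ℤ) + 1)) := by
  rcases Nat.eq_zero_or_pos n with rfl | hn
  · norm_num [Finset.filter_singleton, Nat.odd_iff]
  set m := (n + 1) / 2 with hm
  have himg : (Finset.range (n + 1)).filter (fun i => Odd i)
      = (Finset.range m).image (fun j => 2 * j + 1) := by
    ext i
    simp only [Finset.mem_filter, Finset.mem_range, Finset.mem_image, Nat.odd_iff]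
    constructor
    · rintro ⟨h1, h2⟩; exact ⟨i / 2, by omega, by omega⟩
    · rintro ⟨j, hj, rfl⟩; constructor <;> omega
  rw [himg, Finset.sum_image (by intro a _ b _ h; simp only at h; omega)]
  have hch : ∀ j ∈ Finset.range m,
      ((2 * j + 1 : ℕ) : ℤ) ^ 3 * (Nat.choose (2 * n) (n - (2 * j + 1)) : ℤ)
        = ((2 * j + 1 : ℕ) : ℤ) ^ 3 * Chn n (2 * j + 1) := by
    intro j hj
    rw [Finset.mem_range] at hj
    rw [Chn, if_pos (by omega)]
  rw [Finset.sum_congr rfl hch, Finset.mul_sum]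
  have hstep : ∀ j ∈ Finset.range m,
      2 * (2 * (n : ℤ) - 1) * (2 * (n : ℤ) - 3) * (((2 * j + 1 : ℕ) : ℤ) ^ 3 * Chn n (2 * j + 1))
        = Pn n (2 * j + 1) * Chn n (2 * j + 1) - Pn n (2 * (j + 1) + 1) * Chn n (2 * (j + 1) + 1) := by
    intro j _
    have e : 2 * (j + 1) + 1 = (2 * j + 1) + 2 := by ring
    rw [e, aux_tele n (2 * j + 1)]
    ring
  rw [Finset.sum_congr rfl hstep,
    Finset.sum_range_sub' (fun j => Pn n (2 * j + 1) * Chn n (2 * j + 1)) m]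
  have hz : Chn n (2 * m + 1) = 0 := by rw [Chn, if_neg (by omega)]
  simp only [Nat.mul_zero, Nat.zero_add] at *
  rw [hz, mul_zero, sub_zero]
  have h1 : Chn n 1 = (Nat.choose (2 * n) (n - 1) : ℤ) := by rw [Chn, if_pos (by omega)]
  rw [h1]
  -- choose identity at the endpoint
  have hA := Nat.choose_succ_right_eq (2 * n) (n - 1)
  have e1 : n - 1 + 1 = n := by omega
  have e2 : 2 * n - (n - 1) = n + 1 := by omega
  rw [e1, e2] at hA
  have hA' : ((2 * n).choose n : ℤ) * n = ((2 * n).choose (n - 1) : ℤ) * (n + 1) := by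
    exact_mod_cast congrArg (Nat.cast : ℕ → ℤ) hA
  have hne : ((n : ℤ) + 1) ≠ 0 := by positivity
  apply mul_right_cancel₀ hne
  unfold Pn
  push_cast
  linear_combination (-(2 * (n : ℤ) ^ 4 - 2 * (n : ℤ) ^ 3 - 3 * (n : ℤ) ^ 2 + (n : ℤ))) * hA'
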